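/- Let T > 0, d ≥ 1, and let f : (0,T) × ℝ^d × ℝ^d → [0,∞) be measurable with ∫∫∫ f dt dx dξ < ∞ and ∫∫∫ f log₊ f dt dx dξ < ∞. Let ψ : ℝ^d → ℝ be a bounded measurable function with sup norm ‖ψ‖_∞. Then for every ν > 0 and every M ≥ e, ∫₀^T ∫_{ℝ^d} | ∫_{ℝ^d} (f(t,x,ξ) − β_ν(f(t,x,ξ))) ψ(ξ) dξ | dx dt ≤ ‖ψ‖_∞ ( ν M ∫∫∫ f dt dx dξ + (1/log M) ∫∫∫ f log₊ f dt dx dξ ). -/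

import Mathlib

open MeasureTheory
open scoped ENNReal

/-- `β_ν(s) = s / (1 + ν s)`. -/
noncomputable def betaNu (ν s : ℝ) : ℝ := s / (1 + ν * s)

lemma betaNu_sub_nonneg (ν s : ℝ) (hν : 0 < ν) (hs : 0 ≤ s) : 0 ≤ s - betaNu ν s := by
  unfold betaNu
  have h1 : (1:ℝ) ≤ 1 + ν * s := by nlinarith
  have := div_le_self hs h1
  linarith

lemma betaNu_nonneg (ν s : ℝ) (hν : 0 < ν) (hs : 0 ≤ s) : 0 ≤ betaNu ν s := by
  unfold betaNu
  positivity

lemma betaNu_key (ν M s : ℝ) (hν : 0 < ν) (hM : Real.exp 1 ≤ M) (hs : 0 ≤ s) :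
    s - betaNu ν s ≤ ν * M * s + (1 / Real.log M) * (s * max (Real.log s) 0) := by
  have hM1 : (1:ℝ) < M := lt_of_lt_of_le (by nlinarith [Real.add_one_le_exp (1:ℝ)]) hM
  have hlogM : 1 ≤ Real.log M := by
    rw [show (1:ℝ) = Real.log (Real.exp 1) from (Real.log_exp 1).symm]
    exact Real.log_le_log (Real.exp_pos 1) hM
  have hlogM0 : 0 < Real.log M := lt_of_lt_of_le one_pos hlogM
  have hden : (1:ℝ) ≤ 1 + ν * s := by nlinarith
  by_cases hsM : s ≤ M
  · have h1 : s - betaNu ν s = ν * s ^ 2 / (1 + ν * s) := by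
      unfold betaNu; field_simp; ring
    have h2 : ν * s ^ 2 / (1 + ν * s) ≤ ν * s ^ 2 := div_le_self (by positivity) hden
    have h3 : ν * s ^ 2 ≤ ν * M * s := by nlinarith
    have h4 : 0 ≤ (1 / Real.log M) * (s * max (Real.log s) 0) := by positivity
    linarith
  · push_neg at hsM
    have hb : 0 ≤ betaNu ν s := betaNu_nonneg ν s hν hs
    have hlogs : Real.log M ≤ Real.log s := Real.log_le_log (by linarith) (le_of_lt hsM)
    have hmax : max (Real.log s) 0 = Real.log s := max_eq_left (by linarith)
    have h5 : s ≤ (1 / Real.log M) * (s * Real.log s) := by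
      rw [one_div, mul_comm, mul_assoc]
      have h7 : 1 ≤ Real.log s * (Real.log M)⁻¹ := by
        rw [← div_eq_mul_inv, le_div_iff₀ hlogM0]; linarith
      nlinarith
    have h6 : 0 ≤ ν * M * s := by positivity
    rw [hmax]; linarith


lemma lin_comb {α : Type*} [MeasurableSpace α] (μ : MeasureTheory.Measure α)
    (a b : ℝ≥0∞) (ha : a ≠ ⊤) (hb : b ≠ ⊤) {G H : α → ℝ≥0∞}
    (hG : Measurable G) (hH : Measurable H) :
    ∫⁻ x, (a * G x + b * H x) ∂μ = a * (∫⁻ x, G x ∂μ) + b * (∫⁻ x, H x ∂μ) := by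
  rw [MeasureTheory.lintegral_add_left (hG.const_mul a),
    MeasureTheory.lintegral_const_mul' a _ ha, MeasureTheory.lintegral_const_mul' b _ hb]

/-- for nonnegative measurable `f` on `(0,T) × ℝ^d × ℝ^d` with finite
`∫∫∫ f` and `∫∫∫ f log₊ f`, a bounded measurable `ψ` with `|ψ| ≤ ‖ψ‖_∞`, every `ν > 0`
and every `M ≥ e`:
`∫₀^T ∫ |∫ (f − β_ν(f)) ψ dξ| dx dt ≤ ‖ψ‖_∞ (ν M ∫∫∫ f + (1/log M) ∫∫∫ f log₊ f)`. -/
theorem truncation_error_estimate (T : ℝ) (hT : 0 < T) (d : ℕ) (hd : 1 ≤ d)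
    (f : ℝ → EuclideanSpace ℝ (Fin d) → EuclideanSpace ℝ (Fin d) → ℝ)
    (hmeas : Measurable (fun p : ℝ × EuclideanSpace ℝ (Fin d) × EuclideanSpace ℝ (Fin d) =>
      f p.1 p.2.1 p.2.2))
    (hpos : ∀ t x ξ, 0 ≤ f t x ξ)
    (hint1 : (∫⁻ t in Set.Ioo 0 T, ∫⁻ x, ∫⁻ ξ, ENNReal.ofReal (f t x ξ)) < ⊤)
    (hint2 : (∫⁻ t in Set.Ioo 0 T, ∫⁻ x, ∫⁻ ξ,
      ENNReal.ofReal (f t x ξ * max (Real.log (f t x ξ)) 0)) < ⊤)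
    (ψ : EuclideanSpace ℝ (Fin d) → ℝ) (hψmeas : Measurable ψ)
    (ψnorm : ℝ) (hψbound : ∀ ξ, |ψ ξ| ≤ ψnorm)
    (ν M : ℝ) (hν : 0 < ν) (hM : Real.exp 1 ≤ M) :
    (∫⁻ t in Set.Ioo 0 T, ∫⁻ x, ENNReal.ofReal
        |∫ ξ, (f t x ξ - betaNu ν (f t x ξ)) * ψ ξ|) ≤
      ENNReal.ofReal ψnorm *
        (ENNReal.ofReal (ν * M) * (∫⁻ t in Set.Ioo 0 T, ∫⁻ x, ∫⁻ ξ, ENNReal.ofReal (f t x ξ)) +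
          ENNReal.ofReal (1 / Real.log M) * (∫⁻ t in Set.Ioo 0 T, ∫⁻ x, ∫⁻ ξ,
            ENNReal.ofReal (f t x ξ * max (Real.log (f t x ξ)) 0))) := by
  have hψ0 : 0 ≤ ψnorm := le_trans (abs_nonneg _) (hψbound 0)
  have hM0 : 0 < M := lt_of_lt_of_le (Real.exp_pos 1) hM
  have hlogM : 1 ≤ Real.log M := by
    rw [show (1:ℝ) = Real.log (Real.exp 1) from (Real.log_exp 1).symm]
    exact Real.log_le_log (Real.exp_pos 1) hM
  have hinv0 : 0 ≤ 1 / Real.log M := by positivity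
  have hνM0 : 0 ≤ ν * M := by positivity
  set C := ENNReal.ofReal ψnorm with hC
  set a := ENNReal.ofReal (ν * M) with ha
  set b := ENNReal.ofReal (1 / Real.log M) with hb
  -- measurability of sections
  have hsec : ∀ t x, Measurable fun ξ => f t x ξ := fun t x =>
    hmeas.comp (measurable_const.prodMk (measurable_const.prodMk measurable_id))
  have hm1 : ∀ t x, Measurable fun ξ => ENNReal.ofReal (f t x ξ) :=
    fun t x => (hsec t x).ennreal_ofReal
  have hm2 : ∀ t x, Measurable fun ξ =>
      ENNReal.ofReal (f t x ξ * max (Real.log (f t x ξ)) 0) :=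
    fun t x => ((hsec t x).mul ((Real.measurable_log.comp (hsec t x)).max
      measurable_const)).ennreal_ofReal
  -- pointwise bound
  have hpt : ∀ t x ξ, ENNReal.ofReal |(f t x ξ - betaNu ν (f t x ξ)) * ψ ξ| ≤
      C * (a * ENNReal.ofReal (f t x ξ) +
        b * ENNReal.ofReal (f t x ξ * max (Real.log (f t x ξ)) 0)) := by
    intro t x ξ
    have hs := hpos t x ξ
    have h3 : 0 ≤ f t x ξ - betaNu ν (f t x ξ) := betaNu_sub_nonneg ν _ hν hs
    have h1 := betaNu_key ν M (f t x ξ) hν hM hs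
    have hR : 0 ≤ ν * M * f t x ξ +
        (1 / Real.log M) * (f t x ξ * max (Real.log (f t x ξ)) 0) := by
      have := le_max_right (Real.log (f t x ξ)) 0
      have h6 : 0 ≤ ν * M * f t x ξ := by positivity
      nlinarith
    have hreal : |(f t x ξ - betaNu ν (f t x ξ)) * ψ ξ| ≤
        ψnorm * (ν * M * f t x ξ +
          (1 / Real.log M) * (f t x ξ * max (Real.log (f t x ξ)) 0)) := by
      rw [abs_mul, abs_of_nonneg h3]
      calc (f t x ξ - betaNu ν (f t x ξ)) * |ψ ξ|
          ≤ (ν * M * f t x ξ +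
            (1 / Real.log M) * (f t x ξ * max (Real.log (f t x ξ)) 0)) * ψnorm :=
            mul_le_mul h1 (hψbound ξ) (abs_nonneg _) hR
        _ = _ := mul_comm _ _
    calc ENNReal.ofReal |(f t x ξ - betaNu ν (f t x ξ)) * ψ ξ|
        ≤ ENNReal.ofReal (ψnorm * (ν * M * f t x ξ +
          (1 / Real.log M) * (f t x ξ * max (Real.log (f t x ξ)) 0))) :=
          ENNReal.ofReal_le_ofReal hreal
      _ = C * (a * ENNReal.ofReal (f t x ξ) +
          b * ENNReal.ofReal (f t x ξ * max (Real.log (f t x ξ)) 0)) := by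
          rw [ENNReal.ofReal_mul hψ0,
            ENNReal.ofReal_add (by positivity) (by
              have := le_max_right (Real.log (f t x ξ)) 0
              have hs := hpos t x ξ
              have : 0 ≤ f t x ξ * max (Real.log (f t x ξ)) 0 := by positivity
              positivity),
            ENNReal.ofReal_mul hνM0, ENNReal.ofReal_mul hinv0]
  -- inner integral bound
  have hinner : ∀ t x, ENNReal.ofReal |∫ ξ, (f t x ξ - betaNu ν (f t x ξ)) * ψ ξ| ≤
      C * (a * (∫⁻ ξ, ENNReal.ofReal (f t x ξ)) +
        b * (∫⁻ ξ, ENNReal.ofReal (f t x ξ * max (Real.log (f t x ξ)) 0))) := by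
    intro t x
    calc ENNReal.ofReal |∫ ξ, (f t x ξ - betaNu ν (f t x ξ)) * ψ ξ|
        = ‖∫ ξ, (f t x ξ - betaNu ν (f t x ξ)) * ψ ξ‖ₑ :=
          (Real.enorm_eq_ofReal_abs _).symm
      _ ≤ ∫⁻ ξ, ‖(f t x ξ - betaNu ν (f t x ξ)) * ψ ξ‖ₑ :=
          enorm_integral_le_lintegral_enorm _
      _ = ∫⁻ ξ, ENNReal.ofReal |(f t x ξ - betaNu ν (f t x ξ)) * ψ ξ| := by
          simp_rw [Real.enorm_eq_ofReal_abs]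
      _ ≤ ∫⁻ ξ, C * (a * ENNReal.ofReal (f t x ξ) +
          b * ENNReal.ofReal (f t x ξ * max (Real.log (f t x ξ)) 0)) :=
          lintegral_mono (hpt t x)
      _ = C * (a * (∫⁻ ξ, ENNReal.ofReal (f t x ξ)) +
          b * (∫⁻ ξ, ENNReal.ofReal (f t x ξ * max (Real.log (f t x ξ)) 0))) := by
          rw [lintegral_const_mul' C _ ENNReal.ofReal_ne_top,
            lin_comb _ a b ENNReal.ofReal_ne_top ENNReal.ofReal_ne_top (hm1 t x) (hm2 t x)]
  -- measurability of iterated integrals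
  have hbase : Measurable fun p : (ℝ × EuclideanSpace ℝ (Fin d)) × EuclideanSpace ℝ (Fin d) =>
      f p.1.1 p.1.2 p.2 :=
    hmeas.comp ((measurable_fst.fst).prodMk ((measurable_fst.snd).prodMk measurable_snd))
  have hG1 : Measurable fun p : ℝ × EuclideanSpace ℝ (Fin d) =>
      ∫⁻ ξ, ENNReal.ofReal (f p.1 p.2 ξ) :=
    Measurable.lintegral_prod_right' hbase.ennreal_ofReal
  have hG2 : Measurable fun p : ℝ × EuclideanSpace ℝ (Fin d) =>
      ∫⁻ ξ, ENNReal.ofReal (f p.1 p.2 ξ * max (Real.log (f p.1 p.2 ξ)) 0) :=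
    Measurable.lintegral_prod_right'
      ((hbase.mul ((Real.measurable_log.comp hbase).max measurable_const)).ennreal_ofReal)
  have hH1 : Measurable fun t : ℝ => ∫⁻ x, ∫⁻ ξ, ENNReal.ofReal (f t x ξ) :=
    Measurable.lintegral_prod_right' hG1
  have hH2 : Measurable fun t : ℝ =>
      ∫⁻ x, ∫⁻ ξ, ENNReal.ofReal (f t x ξ * max (Real.log (f t x ξ)) 0) :=
    Measurable.lintegral_prod_right' hG2
  -- x-level bound
  have hx : ∀ t, (∫⁻ x, ENNReal.ofReal |∫ ξ, (f t x ξ - betaNu ν (f t x ξ)) * ψ ξ|) ≤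
      C * (a * (∫⁻ x, ∫⁻ ξ, ENNReal.ofReal (f t x ξ)) +
        b * (∫⁻ x, ∫⁻ ξ, ENNReal.ofReal (f t x ξ * max (Real.log (f t x ξ)) 0))) := by
    intro t
    calc (∫⁻ x, ENNReal.ofReal |∫ ξ, (f t x ξ - betaNu ν (f t x ξ)) * ψ ξ|)
        ≤ ∫⁻ x, C * (a * (∫⁻ ξ, ENNReal.ofReal (f t x ξ)) +
          b * (∫⁻ ξ, ENNReal.ofReal (f t x ξ * max (Real.log (f t x ξ)) 0))) :=
          lintegral_mono (hinner t)
      _ = _ := by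
          have m1 : Measurable fun x => ∫⁻ ξ, ENNReal.ofReal (f t x ξ) :=
            hG1.comp measurable_prodMk_left
          have m2 : Measurable fun x =>
              ∫⁻ ξ, ENNReal.ofReal (f t x ξ * max (Real.log (f t x ξ)) 0) :=
            hG2.comp measurable_prodMk_left
          rw [lintegral_const_mul' C _ ENNReal.ofReal_ne_top,
            lin_comb _ a b ENNReal.ofReal_ne_top ENNReal.ofReal_ne_top m1 m2]
  -- t-level conclusion
  calc (∫⁻ t in Set.Ioo 0 T, ∫⁻ x, ENNReal.ofReal
        |∫ ξ, (f t x ξ - betaNu ν (f t x ξ)) * ψ ξ|)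
      ≤ ∫⁻ t in Set.Ioo 0 T, C * (a * (∫⁻ x, ∫⁻ ξ, ENNReal.ofReal (f t x ξ)) +
        b * (∫⁻ x, ∫⁻ ξ, ENNReal.ofReal (f t x ξ * max (Real.log (f t x ξ)) 0))) :=
        lintegral_mono fun t => hx t
    _ = _ := by
        rw [lintegral_const_mul' C _ ENNReal.ofReal_ne_top,
          lin_comb _ a b ENNReal.ofReal_ne_top ENNReal.ofReal_ne_top hH1 hH2]
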